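/- For n ≥ 1, the Loewy length of the convolution algebra A_n is n; that is, the n-th power of the Jacobson radical of A_n is zero, while the (n−1)-st power of the Jacobson radical of A_n is nonzero. -/

import Mathlib

/-- The monoid of partial functions on `{1,…,n}`, modeled as `Fin n → Option (Fin n)`,
under composition of partial functions (right to left). -/
abbrev PT (n : ℕ) := Fin n → Option (Fin n)

namespace PT

variable {n : ℕ}

/-- Composition of partial functions, right to left: `comp s t = s ∘ t`. -/
def comp (s t : PT n) : PT n := fun x => (t x).bind s

/-- The domain of a partial function. -/
def dom (t : PT n) : Finset (Fin n) := Finset.univ.filter fun x => (t x).isSome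

/-- The image (range) of a partial function. -/
def ran (t : PT n) : Finset (Fin n) := Finset.univ.filter fun y => ∃ x, t x = some y

/-- The identity partial function on the subset `X`. -/
def idOn (X : Finset (Fin n)) : PT n := fun x => if x ∈ X then some x else none

instance : Monoid (PT n) where
  mul := comp
  one := fun x => some x
  mul_assoc s t w := by
    funext x
    show (w x).bind (fun z => (t z).bind s) = ((w x).bind t).bind s
    exact (Option.bind_assoc (w x) t s).symm
  one_mul t := by
    funext x
    show (t x).bind (fun y => some y) = t x
    cases t x <;> rfl
  mul_one t := by
    funext x
    show (some x).bind t = t x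
    rfl

end PT

namespace PT

variable {n : ℕ}

lemma mem_dom {t : PT n} {x : Fin n} : x ∈ dom t ↔ (t x).isSome := by simp [dom]

lemma mem_ran {t : PT n} {y : Fin n} : y ∈ ran t ↔ ∃ x, t x = some y := by simp [ran]

lemma comp_assoc (s t w : PT n) : comp (comp s t) w = comp s (comp t w) := mul_assoc s t w

lemma dom_comp {s t : PT n} (h : dom s = ran t) : dom (comp s t) = dom t := by
  ext x
  rw [mem_dom, mem_dom]
  show ((t x).bind s).isSome ↔ _
  cases ht : t x with
  | none => simp
  | some a =>
    have ha : a ∈ dom s := by rw [h, mem_ran]; exact ⟨x, ht⟩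
    rw [mem_dom] at ha
    simpa using ha
  

lemma ran_comp {t w : PT n} (h : dom t = ran w) : ran (comp t w) = ran t := by
  ext y
  rw [mem_ran, mem_ran]
  constructor
  · rintro ⟨x, hx⟩
    rcases Option.bind_eq_some_iff.mp hx with ⟨a, _, hta⟩
    exact ⟨a, hta⟩
  · rintro ⟨a, hta⟩
    have ha : a ∈ ran w := by
      rw [← h, mem_dom]
      simp [hta]
    rcases mem_ran.mp ha with ⟨x, hx⟩
    exact ⟨x, by show (w x).bind t = some y; rw [hx]; exact hta⟩

lemma dom_idOn (X : Finset (Fin n)) : dom (idOn X) = X := by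
  ext x
  rw [mem_dom, idOn]
  by_cases h : x ∈ X <;> simp [h]

lemma ran_idOn (X : Finset (Fin n)) : ran (idOn X) = X := by
  ext y
  rw [mem_ran]
  constructor
  · rintro ⟨x, hx⟩
    unfold idOn at hx
    split at hx
    · cases Option.some_injective _ hx; assumption
    · exact absurd hx (by simp)
  · intro hy
    exact ⟨y, by unfold idOn; rw [if_pos hy]⟩

lemma comp_idOn {s : PT n} : comp s (idOn (dom s)) = s := by
  funext x
  show ((idOn (dom s)) x).bind s = s x
  unfold idOn
  by_cases h : x ∈ dom s
  · rw [if_pos h]; rfl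
  · rw [if_neg h]
    rw [mem_dom] at h
    cases hs : s x with
    | none => rfl
    | some a => rw [hs] at h; simp at h

lemma idOn_comp {t : PT n} : comp (idOn (ran t)) t = t := by
  funext x
  show (t x).bind (idOn (ran t)) = t x
  cases ht : t x with
  | none => rfl
  | some a =>
    show idOn (ran t) a = some a
    unfold idOn
    rw [if_pos (mem_ran.mpr ⟨x, ht⟩)]

end PT

/-- The convolution algebra `A_n` of the epimorphism category: the vector space with basis
`{e_t : t ∈ PT_n}` and multiplication `e_s · e_t = e_{s ∘ t}` if `dom s = im t`, else `0`. -/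
noncomputable def PTAlg (n : ℕ) : Type := PT n →₀ ℂ

namespace PTAlg

variable {n : ℕ}

noncomputable instance : AddCommGroup (PTAlg n) := inferInstanceAs (AddCommGroup (PT n →₀ ℂ))
noncomputable instance : Module ℂ (PTAlg n) := inferInstanceAs (Module ℂ (PT n →₀ ℂ))

/-- The coefficient of `t` in an element of `A_n`. -/
noncomputable def coeff (a : PTAlg n) : PT n → ℂ := fun t => (show PT n →₀ ℂ from a) t

/-- The basis element `e_t` of `A_n`. -/
noncomputable def e (t : PT n) : PTAlg n := show PT n →₀ ℂ from Finsupp.single t 1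

/-- Convolution: `e_s · e_t = e_{s ∘ t}` if `dom s = im t`, and `0` otherwise. -/
noncomputable instance : Mul (PTAlg n) :=
  ⟨fun a b =>
    show PT n →₀ ℂ from
      Finsupp.equivFunOnFinite.symm fun u =>
        ∑ p : PT n × PT n,
          if PT.dom p.1 = PT.ran p.2 ∧ PT.comp p.1 p.2 = u then coeff a p.1 * coeff b p.2
          else 0⟩

/-- The multiplicative unit of `A_n` is `∑_{X ⊆ {1,…,n}} e_{id_X}`. -/
noncomputable instance : One (PTAlg n) := ⟨∑ X : Finset (Fin n), e (PT.idOn X)⟩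

end PTAlg

namespace PTAlg

variable {n : ℕ}

open PT

lemma ext' {a b : PTAlg n} (h : ∀ u, coeff a u = coeff b u) : a = b := Finsupp.ext h

lemma coeff_mul (a b : PTAlg n) (u : PT n) :
    coeff (a * b) u =
      ∑ p : PT n × PT n,
        if dom p.1 = ran p.2 ∧ comp p.1 p.2 = u then coeff a p.1 * coeff b p.2 else 0 :=
  congrFun (Finsupp.coe_equivFunOnFinite_symm _) _

lemma coeff_add (a b : PTAlg n) (u : PT n) : coeff (a + b) u = coeff a u + coeff b u := rfl

lemma coeff_zero (u : PT n) : coeff (0 : PTAlg n) u = 0 := rfl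

lemma coeff_smul (r : ℂ) (a : PTAlg n) (u : PT n) : coeff (r • a) u = r * coeff a u := rfl

lemma coeff_e (t u : PT n) : coeff (e t) u = if t = u then 1 else 0 := Finsupp.single_apply

lemma coeff_one (u : PT n) :
    coeff (1 : PTAlg n) u = if u = idOn (dom u) then 1 else 0 := by
  show coeff (∑ X : Finset (Fin n), e (idOn X)) u = _
  have : ∀ (l : Finset (Finset (Fin n))), coeff (∑ X ∈ l, e (idOn X)) u
      = ∑ X ∈ l, coeff (e (idOn X)) u := by
    intro l
    induction l using Finset.induction_on with
    | empty => simp [coeff_zero]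
    | insert s₁ l₁ hx ih => rw [Finset.sum_insert hx, Finset.sum_insert hx, coeff_add, ih]
  rw [this]
  by_cases h : u = idOn (dom u)
  · rw [if_pos h]
    rw [Finset.sum_eq_single (dom u)]
    · rw [coeff_e, if_pos h.symm]
    · intro X _ hX
      rw [coeff_e, if_neg]
      intro hc
      apply hX
      rw [← dom_idOn X, hc]
    · intro habs; exact absurd (Finset.mem_univ _) habs
  · rw [if_neg h]
    apply Finset.sum_eq_zero
    intro X _
    rw [coeff_e, if_neg]
    intro hc
    apply h
    have : dom u = X := by rw [← hc, dom_idOn]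
    rw [this, hc]

end PTAlg

namespace PTAlg

variable {n : ℕ}
open PT

lemma left_distrib' (a b c : PTAlg n) : a * (b + c) = a * b + a * c := by
  apply ext'; intro u
  rw [coeff_add, coeff_mul, coeff_mul, coeff_mul, ← Finset.sum_add_distrib]
  apply Finset.sum_congr rfl
  intro p _
  split_ifs with h
  · rw [coeff_add]; ring
  · rw [add_zero]

lemma right_distrib' (a b c : PTAlg n) : (a + b) * c = a * c + b * c := by
  apply ext'; intro u
  rw [coeff_add, coeff_mul, coeff_mul, coeff_mul, ← Finset.sum_add_distrib]
  apply Finset.sum_congr rfl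
  intro p _
  split_ifs with h
  · rw [coeff_add]; ring
  · rw [add_zero]

lemma zero_mul' (a : PTAlg n) : 0 * a = 0 := by
  apply ext'; intro u
  rw [coeff_mul, coeff_zero]
  apply Finset.sum_eq_zero
  intro p _
  split_ifs with h
  · rw [coeff_zero, zero_mul]
  · rfl

lemma mul_zero' (a : PTAlg n) : a * 0 = 0 := by
  apply ext'; intro u
  rw [coeff_mul, coeff_zero]
  apply Finset.sum_eq_zero
  intro p _
  split_ifs with h
  · rw [coeff_zero, mul_zero]
  · rfl

lemma mul_one' (a : PTAlg n) : a * 1 = a := by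
  apply ext'
  intro u
  rw [coeff_mul]
  rw [Finset.sum_eq_single ((u, idOn (dom u)) : PT n × PT n)]
  · rw [if_pos ⟨by rw [ran_idOn], comp_idOn⟩, coeff_one, if_pos (by rw [dom_idOn]), mul_one]
  · rintro ⟨s, t⟩ _ hne
    dsimp only at hne ⊢
    split_ifs with hcond
    · obtain ⟨h1, h2⟩ := hcond
      rw [coeff_one]
      split_ifs with ht
      · exfalso
        apply hne
        rw [ht, ran_idOn] at h1
        rw [ht, ← h1, comp_idOn] at h2
        subst h2
        rw [Prod.mk.injEq]
        refine ⟨rfl, ?_⟩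
        rw [ht, h1]
      · rw [mul_zero]
    · rfl
  · intro habs; exact absurd (Finset.mem_univ _) habs

lemma one_mul' (a : PTAlg n) : 1 * a = a := by
  apply ext'
  intro u
  rw [coeff_mul]
  rw [Finset.sum_eq_single ((idOn (ran u), u) : PT n × PT n)]
  · rw [if_pos ⟨by rw [dom_idOn], idOn_comp⟩, coeff_one, if_pos (by rw [dom_idOn]), one_mul]
  · rintro ⟨s, t⟩ _ hne
    dsimp only at hne ⊢
    split_ifs with hcond
    · obtain ⟨h1, h2⟩ := hcond
      rw [coeff_one]
      split_ifs with hs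
      · exfalso
        apply hne
        rw [hs, h1, idOn_comp] at h2
        subst h2
        rw [Prod.mk.injEq]
        refine ⟨?_, rfl⟩
        rw [hs, h1]
      · rw [zero_mul]
    · rfl
  · intro habs; exact absurd (Finset.mem_univ _) habs

end PTAlg

namespace PTAlg

variable {n : ℕ}
open PT

lemma key_left (a b c : PTAlg n) (u w : PT n) :
    (∑ q1 : PT n, if dom q1 = ran w ∧ comp q1 w = u then coeff (a * b) q1 * coeff c w else 0)
      = ∑ s : PT n, ∑ t : PT n,
          if dom s = ran t ∧ dom t = ran w ∧ comp (comp s t) w = u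
          then coeff a s * coeff b t * coeff c w else 0 := by
  have step : ∀ q1 : PT n,
      (if dom q1 = ran w ∧ comp q1 w = u then coeff (a * b) q1 * coeff c w else 0)
        = ∑ s : PT n, ∑ t : PT n,
            if (dom s = ran t ∧ comp s t = q1) ∧ (dom q1 = ran w ∧ comp q1 w = u)
            then coeff a s * coeff b t * coeff c w else 0 := by
    intro q1
    by_cases h : dom q1 = ran w ∧ comp q1 w = u
    · rw [if_pos h, coeff_mul, Fintype.sum_prod_type, Finset.sum_mul]
      apply Finset.sum_congr rfl
      intro s _
      rw [Finset.sum_mul]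
      apply Finset.sum_congr rfl
      intro t _
      rw [ite_mul, zero_mul]
      by_cases h2 : dom s = ran t ∧ comp s t = q1
      · rw [if_pos h2, if_pos ⟨h2, h⟩]
      · rw [if_neg h2, if_neg (fun hc => h2 hc.1)]
    · rw [if_neg h]
      symm
      apply Finset.sum_eq_zero; intro s _
      apply Finset.sum_eq_zero; intro t _
      exact if_neg (fun hc => h hc.2)
  rw [Finset.sum_congr rfl (fun q1 _ => step q1), Finset.sum_comm]
  apply Finset.sum_congr rfl
  intro s _
  rw [Finset.sum_comm]
  apply Finset.sum_congr rfl
  intro t _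
  rw [Finset.sum_eq_single (comp s t)]
  · apply if_congr _ rfl rfl
    constructor
    · rintro ⟨⟨h1, -⟩, h2, h3⟩
      exact ⟨h1, by rw [← dom_comp h1]; exact h2, h3⟩
    · rintro ⟨h1, h2, h3⟩
      exact ⟨⟨h1, rfl⟩, by rw [dom_comp h1]; exact h2, h3⟩
  · intro q1 _ hne
    apply if_neg
    rintro ⟨⟨-, hq⟩, -⟩
    exact hne hq.symm
  · intro habs; exact absurd (Finset.mem_univ _) habs

lemma key_right (a b c : PTAlg n) (u s : PT n) :
    (∑ q2 : PT n, if dom s = ran q2 ∧ comp s q2 = u then coeff a s * coeff (b * c) q2 else 0)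
      = ∑ t : PT n, ∑ w : PT n,
          if dom s = ran t ∧ dom t = ran w ∧ comp (comp s t) w = u
          then coeff a s * coeff b t * coeff c w else 0 := by
  have step : ∀ q2 : PT n,
      (if dom s = ran q2 ∧ comp s q2 = u then coeff a s * coeff (b * c) q2 else 0)
        = ∑ t : PT n, ∑ w : PT n,
            if (dom t = ran w ∧ comp t w = q2) ∧ (dom s = ran q2 ∧ comp s q2 = u)
            then coeff a s * coeff b t * coeff c w else 0 := by
    intro q2
    by_cases h : dom s = ran q2 ∧ comp s q2 = u
    · rw [if_pos h, coeff_mul, Fintype.sum_prod_type, Finset.mul_sum]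
      apply Finset.sum_congr rfl
      intro t _
      rw [Finset.mul_sum]
      apply Finset.sum_congr rfl
      intro w _
      rw [mul_ite, mul_zero]
      by_cases h2 : dom t = ran w ∧ comp t w = q2
      · rw [if_pos h2, if_pos ⟨h2, h⟩, mul_assoc]
      · rw [if_neg h2, if_neg (fun hc => h2 hc.1)]
    · rw [if_neg h]
      symm
      apply Finset.sum_eq_zero; intro t _
      apply Finset.sum_eq_zero; intro w _
      exact if_neg (fun hc => h hc.2)
  rw [Finset.sum_congr rfl (fun q2 _ => step q2), Finset.sum_comm]
  apply Finset.sum_congr rfl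
  intro t _
  rw [Finset.sum_comm]
  apply Finset.sum_congr rfl
  intro w _
  rw [Finset.sum_eq_single (comp t w)]
  · apply if_congr _ rfl rfl
    constructor
    · rintro ⟨⟨h1, -⟩, h2, h3⟩
      refine ⟨by rw [← ran_comp h1]; exact h2, h1, ?_⟩
      rw [comp_assoc]; exact h3
    · rintro ⟨h1, h2, h3⟩
      exact ⟨⟨h2, rfl⟩, by rw [ran_comp h2]; exact h1, by rw [← comp_assoc]; exact h3⟩
  · intro q2 _ hne
    apply if_neg
    rintro ⟨⟨-, hq⟩, -⟩
    exact hne hq.symm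
  · intro habs; exact absurd (Finset.mem_univ _) habs

lemma coeff_mul_mul (a b c : PTAlg n) (u : PT n) :
    coeff (a * b * c) u =
      ∑ s : PT n, ∑ t : PT n, ∑ w : PT n,
        if dom s = ran t ∧ dom t = ran w ∧ comp (comp s t) w = u
        then coeff a s * coeff b t * coeff c w else 0 := by
  rw [coeff_mul, Fintype.sum_prod_type, Finset.sum_comm]
  calc (∑ w : PT n, ∑ q1 : PT n,
          if dom q1 = ran w ∧ comp q1 w = u then coeff (a * b) q1 * coeff c w else 0)
      = ∑ w : PT n, ∑ s : PT n, ∑ t : PT n,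
          if dom s = ran t ∧ dom t = ran w ∧ comp (comp s t) w = u
          then coeff a s * coeff b t * coeff c w else 0 :=
        Finset.sum_congr rfl fun w _ => key_left a b c u w
    _ = ∑ s : PT n, ∑ w : PT n, ∑ t : PT n,
          if dom s = ran t ∧ dom t = ran w ∧ comp (comp s t) w = u
          then coeff a s * coeff b t * coeff c w else 0 := Finset.sum_comm
    _ = ∑ s : PT n, ∑ t : PT n, ∑ w : PT n,
          if dom s = ran t ∧ dom t = ran w ∧ comp (comp s t) w = u
          then coeff a s * coeff b t * coeff c w else 0 :=
        Finset.sum_congr rfl fun s _ => Finset.sum_comm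

lemma coeff_mul_mul' (a b c : PTAlg n) (u : PT n) :
    coeff (a * (b * c)) u =
      ∑ s : PT n, ∑ t : PT n, ∑ w : PT n,
        if dom s = ran t ∧ dom t = ran w ∧ comp (comp s t) w = u
        then coeff a s * coeff b t * coeff c w else 0 := by
  rw [coeff_mul, Fintype.sum_prod_type]
  exact Finset.sum_congr rfl fun s _ => key_right a b c u s

lemma mul_assoc' (a b c : PTAlg n) : a * b * c = a * (b * c) :=
  ext' fun u => (coeff_mul_mul a b c u).trans (coeff_mul_mul' a b c u).symm

noncomputable instance : Ring (PTAlg n) :=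
  { (inferInstance : AddCommGroup (PTAlg n)) with
    mul := (· * ·)
    one := 1
    mul_assoc := mul_assoc'
    one_mul := one_mul'
    mul_one := mul_one'
    left_distrib := left_distrib'
    right_distrib := right_distrib'
    zero_mul := zero_mul'
    mul_zero := mul_zero' }

noncomputable instance : Algebra ℂ (PTAlg n) :=
  Algebra.ofModule
    (fun r x y => by
      apply ext'; intro u
      rw [coeff_smul, coeff_mul, coeff_mul, Finset.mul_sum]
      apply Finset.sum_congr rfl
      intro p _
      split_ifs with h
      · rw [coeff_smul]; ring
      · rw [mul_zero])
    (fun r x y => by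
      apply ext'; intro u
      rw [coeff_smul, coeff_mul, coeff_mul, Finset.mul_sum]
      apply Finset.sum_congr rfl
      intro p _
      split_ifs with h
      · rw [coeff_smul]; ring
      · rw [mul_zero])

end PTAlg

/-! ### Auxiliary development for the Loewy length theorem -/

namespace PT

variable {n : ℕ}

lemma card_ran_le_card_dom (u : PT n) : (ran u).card ≤ (dom u).card := by
  classical
  apply Finset.card_le_card_of_injOn
    (fun y => if h : ∃ x, u x = some y then h.choose else y)
  · intro y hy
    simp only [Finset.mem_coe] at hy ⊢
    rw [mem_ran] at hy
    rw [dif_pos hy, mem_dom, hy.choose_spec]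
    rfl
  · intro y1 h1 y2 h2 heq
    simp only [Finset.mem_coe, mem_ran] at h1 h2
    dsimp only at heq
    rw [dif_pos h1, dif_pos h2] at heq
    have e1 := h1.choose_spec
    have e2 := h2.choose_spec
    rw [heq] at e1
    exact Option.some_injective _ (e1.symm.trans e2)

lemma card_dom_le (u : PT n) : (dom u).card ≤ n := by
  refine le_trans (Finset.card_le_univ _) ?_
  simp

/-- A one-sided inverse of a partial function, defined by choice. -/
noncomputable def pinv (u : PT n) : PT n :=
  fun y => if h : ∃ x, u x = some y then some h.choose else none

lemma pinv_eq_some {u : PT n} {y x : Fin n} (h : pinv u y = some x) : u x = some y := by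
  unfold pinv at h
  split at h
  next he => rw [← Option.some_injective _ h]; exact he.choose_spec
  next => exact absurd h (by simp)

lemma dom_pinv (u : PT n) : dom (pinv u) = ran u := by
  ext y
  rw [mem_dom, mem_ran]
  by_cases h : ∃ x, u x = some y
  · simp [pinv, h]
  · simp [pinv, h]

lemma injOn_dom_of_card (u : PT n) (hc : (dom u).card ≤ (ran u).card) :
    ∀ x₁ ∈ dom u, ∀ x₂ ∈ dom u, u x₁ = u x₂ → x₁ = x₂ := by
  intro x₁ h₁ x₂ h₂ he
  refine Finset.inj_on_of_surj_on_of_card_le (s := dom u) (t := (ran u).image some)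
    (fun a _ => u a) (fun a ha => ?_) (fun b hb => ?_) ?_ h₁ h₂ he
  · rw [mem_dom] at ha
    obtain ⟨y, hy⟩ := Option.isSome_iff_exists.mp ha
    show u a ∈ (ran u).image some
    rw [hy]
    exact Finset.mem_image_of_mem _ (mem_ran.mpr ⟨a, hy⟩)
  · obtain ⟨y, hy, rfl⟩ := Finset.mem_image.mp hb
    obtain ⟨x, hx⟩ := mem_ran.mp hy
    exact ⟨x, mem_dom.mpr (by rw [hx]; rfl), hx⟩
  · rwa [Finset.card_image_of_injective _ (Option.some_injective _)]

lemma comp_pinv_self {u : PT n}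
    (hinj : ∀ x₁ ∈ dom u, ∀ x₂ ∈ dom u, u x₁ = u x₂ → x₁ = x₂) :
    comp (pinv u) u = idOn (dom u) := by
  funext x
  show (u x).bind (pinv u) = idOn (dom u) x
  cases hx : u x with
  | none =>
    rw [idOn, if_neg]
    · rfl
    · rw [mem_dom, hx]; simp
  | some y =>
    have hxd : x ∈ dom u := by rw [mem_dom, hx]; simp
    rw [Option.bind_some, idOn, if_pos hxd]
    have hy : ∃ x', u x' = some y := ⟨x, hx⟩
    unfold pinv
    rw [dif_pos hy]
    have hs := hy.choose_spec
    have hcd : hy.choose ∈ dom u := by rw [mem_dom, hs]; rfl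
    rw [hinj _ hcd _ hxd (by rw [hs, hx])]

lemma pinv_comp_eq_idOn {u : PT n}
    (hcard : (dom u).card ≤ (ran u).card)
    {t : PT n} {X : Finset (Fin n)}
    (h1 : ran t = ran u) (h2 : comp (pinv u) t = idOn X) :
    t = u ∧ X = dom u := by
  have hA : ∀ x ∈ X, t x = u x ∧ (t x).isSome := by
    intro x hx
    have hc := congrFun h2 x
    rw [show comp (pinv u) t x = (t x).bind (pinv u) from rfl, idOn, if_pos hx] at hc
    cases ht : t x with
    | none => rw [ht] at hc; simp at hc
    | some y =>
      rw [ht, Option.bind_some] at hc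
      have hu := pinv_eq_some hc
      rw [hu]
      exact ⟨rfl, rfl⟩
  have hB : ∀ x, x ∉ X → t x = none := by
    intro x hx
    have hc := congrFun h2 x
    rw [show comp (pinv u) t x = (t x).bind (pinv u) from rfl, idOn, if_neg hx] at hc
    cases ht : t x with
    | none => rfl
    | some y =>
      exfalso
      rw [ht, Option.bind_some] at hc
      have hy : y ∈ dom (pinv u) := by rw [dom_pinv, ← h1]; exact mem_ran.mpr ⟨x, ht⟩
      rw [mem_dom, hc] at hy
      simp at hy
  have hdt : dom t = X := by
    ext x
    rw [mem_dom]
    constructor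
    · intro hx
      by_contra hxX
      rw [hB x hxX] at hx
      simp at hx
    · intro hx
      exact (hA x hx).2
  have hXsub : X ⊆ dom u := by
    intro x hx
    rw [mem_dom, ← (hA x hx).1]
    exact (hA x hx).2
  have hcardX : (dom u).card ≤ X.card := by
    have := card_ran_le_card_dom t
    rw [hdt, h1] at this
    omega
  have hXeq : X = dom u := Finset.eq_of_subset_of_card_le hXsub hcardX
  refine ⟨?_, hXeq⟩
  funext x
  by_cases hx : x ∈ X
  · exact (hA x hx).1
  · rw [hB x hx]
    rw [hXeq] at hx
    rw [mem_dom] at hx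
    cases hu : u x with
    | none => rfl
    | some y => rw [hu] at hx; simp at hx

end PT

namespace PTAlg

variable {n : ℕ}
open PT

lemma e_ne_zero (t : PT n) : e t ≠ 0 := by
  intro h
  have h1 : coeff (e t) t = coeff (0 : PTAlg n) t := by rw [h]
  rw [coeff_e, if_pos rfl, coeff_zero] at h1
  exact one_ne_zero h1

lemma one_ne_zero' : (1 : PTAlg n) ≠ 0 := by
  intro h
  have h1 : coeff (1 : PTAlg n) (idOn ∅) = coeff (0 : PTAlg n) (idOn ∅) := by rw [h]
  rw [coeff_one, coeff_zero, if_pos (by rw [dom_idOn])] at h1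
  exact one_ne_zero h1

lemma e_mul_e {s t : PT n} (h : dom s = ran t) : e s * e t = e (comp s t) := by
  apply ext'; intro u
  rw [coeff_mul, coeff_e]
  rw [Finset.sum_eq_single ((s, t) : PT n × PT n)]
  · rw [coeff_e, coeff_e, if_pos rfl, if_pos rfl]
    by_cases hc : comp s t = u
    · rw [if_pos ⟨h, hc⟩, if_pos hc, mul_one]
    · rw [if_neg (fun hh => hc hh.2), if_neg hc]
  · rintro ⟨s', t'⟩ - hne
    dsimp only
    split_ifs with hcond
    · rw [coeff_e, coeff_e]
      by_cases hs : s = s'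
      · rw [if_neg (fun ht : t = t' => hne (by rw [hs, ht])), mul_zero]
      · rw [if_neg hs, zero_mul]
    · rfl
  · intro habs; exact absurd (Finset.mem_univ _) habs

lemma exists_of_coeff_mul_ne_zero {a b : PTAlg n} {u : PT n} (h : coeff (a * b) u ≠ 0) :
    ∃ s t, dom s = ran t ∧ comp s t = u ∧ coeff a s ≠ 0 ∧ coeff b t ≠ 0 := by
  rw [coeff_mul] at h
  obtain ⟨p, -, hp⟩ := Finset.exists_ne_zero_of_sum_ne_zero h
  by_cases hc : dom p.1 = ran p.2 ∧ comp p.1 p.2 = u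
  · rw [if_pos hc] at hp
    exact ⟨p.1, p.2, hc.1, hc.2, left_ne_zero_of_mul hp, right_ne_zero_of_mul hp⟩
  · rw [if_neg hc] at hp; exact absurd rfl hp

/-- The submodule of elements supported on partial functions whose domain is at least `k`
larger than their range. -/
def Dk (n k : ℕ) : Submodule ℂ (PTAlg n) where
  carrier := {a | ∀ u : PT n, coeff a u ≠ 0 → (ran u).card + k ≤ (dom u).card}
  add_mem' := by
    intro a b ha hb u hu
    rw [coeff_add] at hu
    by_cases h1 : coeff a u ≠ 0
    · exact ha u h1
    · push_neg at h1
      exact hb u (by rwa [h1, zero_add] at hu)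
  zero_mem' := fun u hu => absurd (coeff_zero u) hu
  smul_mem' := by
    intro c a ha u hu
    rw [coeff_smul] at hu
    exact ha u (right_ne_zero_of_mul hu)

lemma mem_Dk {k : ℕ} {a : PTAlg n} :
    a ∈ Dk n k ↔ ∀ u, coeff a u ≠ 0 → (ran u).card + k ≤ (dom u).card := Iff.rfl

lemma mem_Dk_zero (a : PTAlg n) : a ∈ Dk n 0 := fun u _ => by
  simpa using card_ran_le_card_dom u

lemma mul_mem_Dk {j k : ℕ} {a b : PTAlg n} (ha : a ∈ Dk n j) (hb : b ∈ Dk n k) :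
    a * b ∈ Dk n (j + k) := by
  intro u hu
  obtain ⟨s, t, hdr, hcomp, has, hbt⟩ := exists_of_coeff_mul_ne_zero hu
  have h1 := ha s has
  have h2 := hb t hbt
  have hru : ran u = ran s := by rw [← hcomp, ran_comp hdr]
  have hdu : dom u = dom t := by rw [← hcomp, dom_comp hdr]
  have hst : (dom s).card = (ran t).card := by rw [hdr]
  rw [hru, hdu]
  omega

lemma eq_zero_of_mem_Dk {k : ℕ} (hk : 1 ≤ k) (hnk : n ≤ k) {a : PTAlg n}
    (ha : a ∈ Dk n k) : a = 0 := by
  apply ext'; intro u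
  rw [coeff_zero]
  by_contra h
  have h1 := ha u h
  have h2 : (dom u).card ≤ n := card_dom_le u
  have h3 : (ran u).card = 0 := by omega
  have h4 : (dom u).card = 0 := by
    by_contra h4
    obtain ⟨x, hx⟩ := Finset.card_pos.mp (Nat.pos_of_ne_zero h4)
    rw [mem_dom] at hx
    obtain ⟨y, hy⟩ := Option.isSome_iff_exists.mp hx
    have hyr : y ∈ ran u := mem_ran.mpr ⟨x, hy⟩
    rw [Finset.card_eq_zero] at h3
    rw [h3] at hyr
    exact absurd hyr (Finset.notMem_empty y)
  omega

lemma pow_mem_Dk {a : PTAlg n} (ha : a ∈ Dk n 1) : ∀ k, a ^ (k + 1) ∈ Dk n (k + 1)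
  | 0 => by rwa [pow_one]
  | (k + 1) => by
      have h := mul_mem_Dk (pow_mem_Dk ha k) ha
      rwa [← pow_succ] at h

lemma mem_jacobson_of_mem_Dk1 {a : PTAlg n} (ha : a ∈ Dk n 1) :
    a ∈ Ideal.jacobson (⊥ : Ideal (PTAlg n)) := by
  rw [Ideal.mem_jacobson_iff]
  intro y
  have hay : y * a ∈ Dk n 1 := by
    have h := mul_mem_Dk (mem_Dk_zero y) ha
    simpa using h
  have hnil : IsNilpotent (y * a) :=
    ⟨n + 2, eq_zero_of_mem_Dk (by omega) (by omega) (pow_mem_Dk hay (n + 1))⟩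
  obtain ⟨c, hc⟩ := hnil.isUnit_one_add
  refine ⟨(↑c⁻¹ : PTAlg n), ?_⟩
  rw [Ideal.mem_bot, sub_eq_zero, mul_assoc]
  nth_rewrite 2 [show ((c⁻¹ : (PTAlg n)ˣ) : PTAlg n) = ↑c⁻¹ * 1 from (mul_one _).symm]
  rw [← mul_add, add_comm (y * a) 1, ← hc, Units.inv_mul]

noncomputable instance : Module.Finite ℂ (PTAlg n) :=
  show Module.Finite ℂ (PT n →₀ ℂ) from inferInstance

/-- The standard basis of `A_n`. -/
noncomputable def bas : Module.Basis (PT n) ℂ (PTAlg n) := Finsupp.basisSingleOne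

lemma bas_apply (t : PT n) : (bas : Module.Basis (PT n) ℂ (PTAlg n)) t = e t := by
  have h := congrFun (Finsupp.coe_basisSingleOne (ι := PT n) (R := ℂ)) t
  exact h

lemma bas_repr (a : PTAlg n) (t : PT n) : (bas (n := n)).repr a t = coeff a t := rfl

lemma comp_eq_self_iff {s t : PT n} : (dom s = ran t ∧ comp s t = t) ↔ s = idOn (ran t) := by
  constructor
  · rintro ⟨h1, h2⟩
    funext y
    by_cases hy : y ∈ ran t
    · obtain ⟨x, hx⟩ := mem_ran.mp hy
      have hc := congrFun h2 x
      rw [show comp s t x = (t x).bind s from rfl, hx, Option.bind_some] at hc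
      show s y = idOn (ran t) y
      rw [idOn, if_pos hy, hc]
    · have hns : y ∉ dom s := by rw [h1]; exact hy
      rw [mem_dom] at hns
      show s y = idOn (ran t) y
      rw [idOn, if_neg hy]
      cases hs : s y with
      | none => rfl
      | some z => rw [hs] at hns; simp at hns
  · rintro rfl
    exact ⟨dom_idOn _, idOn_comp⟩

lemma coeff_mul_e_self (b : PTAlg n) (t : PT n) :
    coeff (b * e t) t = coeff b (idOn (ran t)) := by
  rw [coeff_mul]
  rw [Finset.sum_eq_single ((idOn (ran t), t) : PT n × PT n)]
  · rw [if_pos ⟨dom_idOn _, idOn_comp⟩, coeff_e, if_pos rfl, mul_one]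
  · rintro ⟨s', t'⟩ - hne
    dsimp only
    split_ifs with hcond
    · rw [coeff_e]
      by_cases ht : t = t'
      · subst ht
        have hs : s' = idOn (ran t) := comp_eq_self_iff.mp hcond
        exact absurd (by rw [hs]) hne
      · rw [if_neg ht, mul_zero]
    · rfl
  · intro habs; exact absurd (Finset.mem_univ _) habs

lemma trace_mulLeft (b : PTAlg n) :
    LinearMap.trace ℂ (PTAlg n) (LinearMap.mulLeft ℂ b) =
      ∑ t : PT n, coeff b (idOn (ran t)) := by
  classical
  rw [LinearMap.trace_eq_matrix_trace ℂ (bas (n := n)) (LinearMap.mulLeft ℂ b), Matrix.trace]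
  apply Finset.sum_congr rfl
  intro t _
  rw [Matrix.diag_apply, LinearMap.toMatrix_apply, bas_apply, LinearMap.mulLeft_apply,
    bas_repr]
  exact coeff_mul_e_self b t

open Polynomial in
lemma isNilpotent_mulLeft_of_mem_jacobson {b : PTAlg n}
    (hb : b ∈ Ideal.jacobson (⊥ : Ideal (PTAlg n))) :
    IsNilpotent (LinearMap.mulLeft ℂ b) := by
  classical
  set f : Module.End ℂ (PTAlg n) := LinearMap.mulLeft ℂ b with hf
  have hint : IsIntegral ℂ f := IsIntegral.of_finite ℂ f
  have hmon : (minpoly ℂ f).Monic := minpoly.monic hint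
  have hsplit : (minpoly ℂ f).Splits := IsAlgClosed.splits _
  have hroots : ∀ μ ∈ (minpoly ℂ f).roots, μ = 0 := by
    intro μ hμ
    by_contra hμ0
    have hev : f.HasEigenvalue μ :=
      (Module.End.hasEigenvalue_iff_isRoot).mpr (isRoot_of_mem_roots hμ)
    obtain ⟨v, hv⟩ := hev.exists_hasEigenvector
    have hbv : b * v = μ • v := hv.apply_eq_smul
    obtain ⟨z, hz⟩ := Ideal.mem_jacobson_iff.mp hb ((-μ⁻¹) • (1 : PTAlg n))
    rw [Ideal.mem_bot, sub_eq_zero] at hz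
    have hd : z * (((-μ⁻¹) • (1 : PTAlg n)) * b + 1) = 1 := by
      rw [mul_add, mul_one, ← mul_assoc]; exact hz
    have hdv : (((-μ⁻¹) • (1 : PTAlg n)) * b + 1) * v = 0 := by
      rw [smul_mul_assoc, one_mul, add_mul, one_mul, smul_mul_assoc, hbv, smul_smul,
        neg_mul, inv_mul_cancel₀ hμ0, neg_smul, one_smul, neg_add_cancel]
    have hv0 : v = 0 := by
      calc v = 1 * v := (one_mul v).symm
        _ = (z * (((-μ⁻¹) • (1 : PTAlg n)) * b + 1)) * v := by rw [hd]
        _ = z * ((((-μ⁻¹) • (1 : PTAlg n)) * b + 1) * v) := by rw [mul_assoc]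
        _ = 0 := by rw [hdv, mul_zero]
    exact hv.right hv0
  have hprod := hsplit.eq_prod_roots_of_monic hmon
  have hrepl : (minpoly ℂ f).roots.map (fun a => X - C a)
      = Multiset.replicate (Multiset.card (minpoly ℂ f).roots) X := by
    apply Multiset.eq_replicate.mpr
    refine ⟨Multiset.card_map _ _, ?_⟩
    intro p hp
    obtain ⟨μ, hμ, rfl⟩ := Multiset.mem_map.mp hp
    rw [hroots μ hμ, map_zero, sub_zero]
  refine ⟨Multiset.card (minpoly ℂ f).roots, ?_⟩
  have haev := minpoly.aeval ℂ f
  rw [hprod, hrepl, Multiset.prod_replicate, map_pow, aeval_X] at haev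
  exact haev

lemma trace_eq_zero_of_mem_jacobson {b : PTAlg n}
    (hb : b ∈ Ideal.jacobson (⊥ : Ideal (PTAlg n))) :
    LinearMap.trace ℂ (PTAlg n) (LinearMap.mulLeft ℂ b) = 0 :=
  (LinearMap.isNilpotent_trace_of_isNilpotent
    (isNilpotent_mulLeft_of_mem_jacobson hb)).eq_zero

lemma mem_Dk1_of_mem_jacobson {a : PTAlg n}
    (ha : a ∈ Ideal.jacobson (⊥ : Ideal (PTAlg n))) : a ∈ Dk n 1 := by
  intro u hu
  by_contra hlt
  have hle := card_ran_le_card_dom u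
  have hcard : (dom u).card ≤ (ran u).card := by omega
  have hinj := injOn_dom_of_card u hcard
  have hbJ : e (pinv u) * a ∈ Ideal.jacobson (⊥ : Ideal (PTAlg n)) :=
    Ideal.mul_mem_left _ _ ha
  have htr := trace_eq_zero_of_mem_jacobson hbJ
  rw [trace_mulLeft] at htr
  have hterm : ∀ t : PT n,
      coeff (e (pinv u) * a) (idOn (ran t)) = if ran t = dom u then coeff a u else 0 := by
    intro t
    rw [coeff_mul]
    by_cases hX : ran t = dom u
    · rw [if_pos hX]
      rw [Finset.sum_eq_single ((pinv u, u) : PT n × PT n)]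
      · rw [if_pos ⟨by rw [dom_pinv], by rw [comp_pinv_self hinj, hX]⟩, coeff_e,
          if_pos rfl, one_mul]
      · rintro ⟨s', t'⟩ - hne
        dsimp only
        split_ifs with hcond
        · rw [coeff_e]
          by_cases hs : pinv u = s'
          · exfalso
            have h2' : comp (pinv u) t' = idOn (ran t) := by rw [hs]; exact hcond.2
            obtain ⟨rfl, -⟩ := pinv_comp_eq_idOn hcard
              (by rw [← hcond.1, ← hs, dom_pinv]) h2'
            exact hne (by rw [hs])
          · rw [if_neg hs, zero_mul]
        · rfl
      · intro habs; exact absurd (Finset.mem_univ _) habs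
    · rw [if_neg hX]
      apply Finset.sum_eq_zero
      rintro ⟨s', t'⟩ -
      dsimp only
      split_ifs with hcond
      · rw [coeff_e]
        by_cases hs : pinv u = s'
        · exfalso
          have h2' : comp (pinv u) t' = idOn (ran t) := by rw [hs]; exact hcond.2
          obtain ⟨-, hXd⟩ := pinv_comp_eq_idOn hcard
            (by rw [← hcond.1, ← hs, dom_pinv]) h2'
          exact hX hXd
        · rw [if_neg hs, zero_mul]
      · rfl
  rw [Finset.sum_congr rfl (fun t _ => hterm t), ← Finset.sum_filter,
    Finset.sum_const] at htr
  have hmem : idOn (dom u) ∈ Finset.univ.filter (fun t : PT n => ran t = dom u) := by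
    simp [ran_idOn]
  have hpos : 0 < (Finset.univ.filter (fun t : PT n => ran t = dom u)).card :=
    Finset.card_pos.mpr ⟨_, hmem⟩
  rw [nsmul_eq_mul] at htr
  rcases mul_eq_zero.mp htr with h | h
  · have hc0 : (Finset.filter (fun t : PT n => ran t = dom u) Finset.univ).card = 0 := by
      exact_mod_cast h
    omega
  · exact hu h

/-! ### The chain of strictly decreasing partial maps used for the lower bound -/

/-- A step map: defined on `{0,…,j+1}`, sending `x` to `min x j`. -/
def stepF (n j : ℕ) : PT n := fun x =>
  if x.val ≤ j + 1 then some ⟨min x.val j, lt_of_le_of_lt (min_le_left _ _) x.isLt⟩ else none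

/-- The map defined on `{0,…,k}`, sending everything to `0`. -/
def constF (n k : ℕ) : PT n := fun x =>
  if x.val ≤ k then some ⟨0, x.pos⟩ else none

lemma dom_stepF (j : ℕ) : dom (stepF n j) = Finset.univ.filter (fun x : Fin n => x.val ≤ j + 1) := by
  ext x
  rw [mem_dom, Finset.mem_filter]
  unfold stepF
  by_cases h : x.val ≤ j + 1 <;> simp [h]

lemma ran_stepF (j : ℕ) : ran (stepF n j) = Finset.univ.filter (fun y : Fin n => y.val ≤ j) := by
  ext y
  rw [mem_ran, Finset.mem_filter]
  constructor
  · rintro ⟨x, hx⟩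
    unfold stepF at hx
    split at hx
    · cases Option.some_injective _ hx
      exact ⟨Finset.mem_univ _, min_le_right _ _⟩
    · exact absurd hx (by simp)
  · rintro ⟨-, hy⟩
    refine ⟨y, ?_⟩
    unfold stepF
    rw [if_pos (le_trans hy (by omega))]
    congr 1
    exact Fin.ext (min_eq_left hy)

lemma dom_constF (k : ℕ) : dom (constF n k) = Finset.univ.filter (fun x : Fin n => x.val ≤ k) := by
  ext x
  rw [mem_dom, Finset.mem_filter]
  unfold constF
  by_cases h : x.val ≤ k <;> simp [h]

lemma card_filter_le {m : ℕ} (hm : m < n) :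
    (Finset.univ.filter (fun x : Fin n => x.val ≤ m)).card = m + 1 := by
  have : Finset.univ.filter (fun x : Fin n => x.val ≤ m) = Finset.Iic (⟨m, hm⟩ : Fin n) := by
    ext x
    simp [Finset.mem_Iic, Fin.le_def]
  rw [this, Fin.card_Iic]

lemma stepF_mem_Dk1 {j : ℕ} (hj : j + 1 < n) : e (stepF n j) ∈ Dk n 1 := by
  intro u hu
  rw [coeff_e] at hu
  have hu' : stepF n j = u := by
    by_contra h
    rw [if_neg h] at hu
    exact hu rfl
  subst hu'
  rw [dom_stepF, ran_stepF, card_filter_le hj, card_filter_le (show j < n by omega)]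

lemma constF_one_eq : constF n 1 = stepF n 0 := by
  funext x
  unfold constF stepF
  by_cases h : x.val ≤ 1
  · rw [if_pos h, if_pos h]
    congr 1
    exact Fin.ext (by simp [Nat.min_zero])
  · rw [if_neg h, if_neg h]

lemma comp_constF_stepF (k : ℕ) :
    comp (constF n (k + 1)) (stepF n (k + 1)) = constF n (k + 2) := by
  funext x
  show (stepF n (k + 1) x).bind (constF n (k + 1)) = constF n (k + 2) x
  unfold stepF constF
  by_cases h : x.val ≤ k + 2
  · rw [if_pos h, if_pos h, Option.bind_some]
    dsimp only
    rw [if_pos (min_le_right _ _)]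
  · rw [if_neg h, if_neg h]
    rfl

lemma dom_constF_eq_ran_stepF (k : ℕ) : dom (constF n (k + 1)) = ran (stepF n (k + 1)) := by
  rw [dom_constF, ran_stepF]

end PTAlg

open PT PTAlg in
/-- For `n ≥ 1`, the Loewy length of the convolution algebra `A_n` is `n`:
the `n`-th power of the Jacobson radical of `A_n` is zero while the `(n−1)`-st power is
nonzero. -/
theorem loewy_length_of_convolution_algebra (n : ℕ) (hn : 1 ≤ n) :
    (Submodule.restrictScalars ℂ (Ideal.jacobson (⊥ : Ideal (PTAlg n)))) ^ n = ⊥ ∧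
    (Submodule.restrictScalars ℂ (Ideal.jacobson (⊥ : Ideal (PTAlg n)))) ^ (n - 1) ≠ ⊥ := by
  set J : Submodule ℂ (PTAlg n) :=
    Submodule.restrictScalars ℂ (Ideal.jacobson (⊥ : Ideal (PTAlg n))) with hJ
  have hJD : J ≤ Dk n 1 := fun a ha => mem_Dk1_of_mem_jacobson ha
  have hpow : ∀ k : ℕ, J ^ (k + 1) ≤ Dk n (k + 1) := by
    intro k
    induction k with
    | zero => rw [pow_one]; exact hJD
    | succ k ih =>
      rw [pow_succ]
      refine le_trans (mul_le_mul' ih hJD) ?_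
      exact Submodule.mul_le.mpr (fun a ha b hb => mul_mem_Dk ha hb)
  constructor
  · obtain ⟨m, rfl⟩ : ∃ m, n = m + 1 := ⟨n - 1, by omega⟩
    apply le_bot_iff.mp
    refine le_trans (hpow m) ?_
    intro a ha
    rw [Submodule.mem_bot]
    exact eq_zero_of_mem_Dk (by omega) le_rfl ha
  · rcases Nat.lt_or_ge n 2 with h2 | h2
    · -- n = 1, so the 0-th power is the unit submodule
      obtain rfl : n = 1 := by omega
      intro hbot
      rw [show (1 : ℕ) - 1 = 0 from rfl, pow_zero] at hbot
      have h1 : (1 : PTAlg 1) ∈ (1 : Submodule ℂ (PTAlg 1)) := Submodule.one_le.mp le_rfl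
      rw [hbot, Submodule.mem_bot] at h1
      exact one_ne_zero' h1
    · -- n ≥ 2
      have hchain : ∀ k, k + 2 ≤ n → e (constF n (k + 1)) ∈ J ^ (k + 1) := by
        intro k
        induction k with
        | zero =>
          intro hk
          rw [pow_one, constF_one_eq]
          exact mem_jacobson_of_mem_Dk1 (stepF_mem_Dk1 (by omega))
        | succ k ih =>
          intro hk
          have h1 : e (constF n (k + 2)) = e (constF n (k + 1)) * e (stepF n (k + 1)) := by
            rw [e_mul_e (dom_constF_eq_ran_stepF k), comp_constF_stepF]
          rw [h1, pow_succ]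
          refine Submodule.mul_mem_mul (ih (by omega)) ?_
          exact mem_jacobson_of_mem_Dk1 (stepF_mem_Dk1 (by omega))
      intro hbot
      have hm : e (constF n (n - 2 + 1)) ∈ J ^ (n - 2 + 1) := hchain (n - 2) (by omega)
      rw [show n - 2 + 1 = n - 1 from by omega] at hm
      rw [hbot, Submodule.mem_bot] at hm
      exact e_ne_zero _ hm
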